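/- Let n ≥ 2, let (T,σ) ∈ D_{n−1} be a decorated tree, and let (k,l,x), (k′,l′,x′) ∈ P_n satisfy k′ ≤ k and x_i ≤ x′_i for every i ∈ [n−1]. Write (T′,σ′) = h_n((T,σ),(k,l,x)) and (T″,σ″) = h_n((T,σ),(k′,l′,x′)). Then for every integer m ≥ 1 and every vertex v ∈ [n−1]: if d_{T′}(v) < m ≤ d_{T″}(v), then l′ = σ(v) and d_T(v) ≥ m − 1. -/

import Mathlib

/-!
Robin-Hood pruning: the deterministic pruning map `h` is well defined.

Conventions: a rooted labeled tree on `[n]` is encoded on `Fin n` by a root `r` and a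
parent map `p` with `p r = r` and every vertex reaching the root by iterating `p`.
Stamps are 0-based: the paper's stamp of a vertex `v` is `(σ v : ℕ) + 1`; the paper's
parameters `k, l` are kept 1-based (as natural numbers), and `x i` stands for the paper's
`x_{i+1}`.  The pruning maps a decorated tree on `n + 1` vertices (the paper's `n - 1 ≥ 1`
vertices) to one on `n + 2` vertices, the new vertex being `Fin.last (n+1)`.
-/

/-- `(r, p)` encodes a rooted labeled tree on `Fin N`. -/
def IsRootedTree {N : ℕ} (r : Fin N) (p : Fin N → Fin N) : Prop :=
  p r = r ∧ ∀ v : Fin N, ∃ k : ℕ, p^[k] v = r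

/-- `σ` is a stamp history for the tree `(r, p)`: stamps strictly increase away from
the root. -/
def IsStampHistory {N : ℕ} (r : Fin N) (p : Fin N → Fin N) (σ : Equiv.Perm (Fin N)) : Prop :=
  ∀ v : Fin N, v ≠ r → σ (p v) < σ v

/-- Membership in the parameter set `P_{N+1}` for pruning a tree on `N` vertices:
either `1 ≤ l < k ≤ N + 1`, or `k = 1`, `l = 0` and `x_1 = 1`. -/
def PMem {N : ℕ} (k l : ℕ) (x : Fin N → Bool) : Prop :=
  (1 ≤ l ∧ l < k ∧ k ≤ N + 1) ∨ (k = 1 ∧ l = 0 ∧ ∀ h : 0 < N, x ⟨0, h⟩ = true)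

/-- The root of the pruned tree: the new vertex if `k = 1`, otherwise the old root. -/
def hRoot {n : ℕ} (r : Fin (n + 1)) (k : ℕ) : Fin (n + 2) :=
  if k = 1 then Fin.last (n + 1) else r.castSucc

open Fin.NatCast in
/-- The parent map of the pruned tree: vertices `v` with `x_{σ(v)} = 1` and `σ(v) ≥ k`
are rewired to the new vertex; the new vertex attaches to the vertex with stamp `l`
(if `k > 1`), and all other vertices keep their parent. -/
def hParent {n : ℕ} (r : Fin (n + 1)) (p : Fin (n + 1) → Fin (n + 1))
    (σ : Equiv.Perm (Fin (n + 1))) (k l : ℕ) (x : Fin (n + 1) → Bool) :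
    Fin (n + 2) → Fin (n + 2) := fun v =>
  if hv : v = Fin.last (n + 1) then
    if k = 1 then Fin.last (n + 1) else (σ.symm ((l - 1 : ℕ) : Fin (n + 1))).castSucc
  else
    (if x (σ (v.castPred hv)) = true ∧ k ≤ (σ (v.castPred hv) : ℕ) + 1 then Fin.last (n + 1)
     else (p (v.castPred hv)).castSucc)

open Fin.NatCast in
/-- The stamp history of the pruned tree: the new vertex gets stamp `k`, and the old
stamps `≥ k` are shifted up by one. -/
def hStamp {n : ℕ} (σ : Equiv.Perm (Fin (n + 1))) (k : ℕ) : Equiv.Perm (Fin (n + 2)) :=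
  (finSuccEquiv' (Fin.last (n + 1))).trans
    ((Equiv.optionCongr σ).trans (finSuccEquiv' (((k - 1 : ℕ) : Fin (n + 2)))).symm)


/-- The degree of `v` in the tree with parent map `p`: the number of vertices `u ≠ v`
whose parent is `v`. -/
noncomputable def degree {N : ℕ} (p : Fin N → Fin N) (v : Fin N) : ℕ :=
  Nat.card {u : Fin N // u ≠ v ∧ p u = v}

open Fin.NatCast

lemma degree_eq_sum {N : ℕ} (p : Fin N → Fin N) (v : Fin N) :
    degree p v = ∑ u : Fin N, if u ≠ v ∧ p u = v then 1 else 0 := by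
  rw [degree, Nat.card_eq_fintype_card, Fintype.card_subtype, Finset.card_filter]

lemma degree_hParent {n : ℕ} (r : Fin (n+1)) (p : Fin (n+1) → Fin (n+1))
    (σ : Equiv.Perm (Fin (n+1))) (k l : ℕ) (x : Fin (n+1) → Bool) (v : Fin (n+1)) :
    degree (hParent r p σ k l x) v.castSucc =
      (∑ u : Fin (n+1), if u ≠ v ∧ p u = v ∧ ¬(x (σ u) = true ∧ k ≤ (σ u : ℕ) + 1)
        then 1 else 0)
      + (if ¬ k = 1 ∧ σ.symm ((l - 1 : ℕ) : Fin (n+1)) = v then 1 else 0) := by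
  rw [degree_eq_sum, Fin.sum_univ_castSucc]
  have hv : (Fin.last (n+1) : Fin (n+2)) ≠ v.castSucc := (Fin.castSucc_lt_last v).ne'
  congr 1
  · apply Finset.sum_congr rfl
    intro u _
    have hne : (u.castSucc : Fin (n+2)) ≠ Fin.last (n+1) := (Fin.castSucc_lt_last u).ne
    simp only [hParent, dif_neg hne, Fin.castPred_castSucc]
    by_cases hc : x (σ u) = true ∧ k ≤ (σ u : ℕ) + 1
    · simp [hc, hv]
    · simp [hc, Fin.castSucc_inj, and_assoc]
  · simp only [hParent, dif_pos rfl]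
    by_cases hk : k = 1
    · simp [hk, hv]
    · simp [hk, Fin.castSucc_inj, hv]

/-- Proposition 5.2: analysis of the coupling.
Let `(T, σ)` be a decorated tree on `n + 1` vertices and `(k, l, x), (k', l', x')`
parameter triples in `P` with `k' ≤ k` and `x ≤ x'` coordinatewise.  If for some vertex
`v` and some `m ≥ 1` the degree of `v` in `h((T,σ),(k,l,x))` is `< m` while its degree in
`h((T,σ),(k',l',x'))` is `≥ m`, then `l'` equals the (1-based) stamp of `v` and the degree
of `v` in `T` is at least `m - 1`. -/
theorem pruning_coupling_analysis (n : ℕ)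
    (r : Fin (n + 1)) (p : Fin (n + 1) → Fin (n + 1)) (σ : Equiv.Perm (Fin (n + 1)))
    (hT : IsRootedTree r p) (hσ : IsStampHistory r p σ)
    (k l : ℕ) (x : Fin (n + 1) → Bool) (k' l' : ℕ) (x' : Fin (n + 1) → Bool)
    (hP : PMem k l x) (hP' : PMem k' l' x')
    (hk : k' ≤ k) (hx : ∀ i, x i = true → x' i = true)
    (m : ℕ) (hm : 1 ≤ m) (v : Fin (n + 1))
    (hlt : degree (hParent r p σ k l x) v.castSucc < m)
    (hge : m ≤ degree (hParent r p σ k' l' x') v.castSucc) :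
    l' = (σ v : ℕ) + 1 ∧ m - 1 ≤ degree p v := by
  rw [degree_hParent] at hlt hge
  set S : ℕ := ∑ u : Fin (n+1),
      if u ≠ v ∧ p u = v ∧ ¬(x (σ u) = true ∧ k ≤ (σ u : ℕ) + 1) then 1 else 0 with hS
  set S' : ℕ := ∑ u : Fin (n+1),
      if u ≠ v ∧ p u = v ∧ ¬(x' (σ u) = true ∧ k' ≤ (σ u : ℕ) + 1) then 1 else 0 with hS'
  have hSS : S' ≤ S := by
    apply Finset.sum_le_sum
    intro u _
    by_cases hc : u ≠ v ∧ p u = v ∧ ¬(x' (σ u) = true ∧ k' ≤ (σ u : ℕ) + 1)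
    · have hc2 : u ≠ v ∧ p u = v ∧ ¬(x (σ u) = true ∧ k ≤ (σ u : ℕ) + 1) :=
        ⟨hc.1, hc.2.1, fun h => hc.2.2 ⟨hx _ h.1, le_trans hk h.2⟩⟩
      simp [hc, hc2]
    · rw [if_neg hc]; exact Nat.zero_le _
  have hSd : S' ≤ degree p v := by
    rw [degree_eq_sum]
    apply Finset.sum_le_sum
    intro u _
    by_cases hc : u ≠ v ∧ p u = v ∧ ¬(x' (σ u) = true ∧ k' ≤ (σ u : ℕ) + 1)
    · simp [hc, hc.1, hc.2.1]
    · rw [if_neg hc]; exact Nat.zero_le _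
  have he' : ¬ k' = 1 ∧ σ.symm ((l' - 1 : ℕ) : Fin (n+1)) = v := by
    by_contra h
    simp only [if_neg h, add_zero] at hge
    have : S + (if ¬ k = 1 ∧ σ.symm ((l - 1 : ℕ) : Fin (n+1)) = v then 1 else 0) ≥ m := by
      calc m ≤ S' := hge
        _ ≤ S := hSS
        _ ≤ _ := Nat.le_add_right _ _
    omega
  rw [if_pos he'] at hge
  have hS'm : m - 1 ≤ S' := by omega
  refine ⟨?_, le_trans hS'm hSd⟩
  rcases hP' with ⟨hl1, hlk, hkn⟩ | ⟨hk1, _, _⟩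
  · have hvval : σ v = ((l' - 1 : ℕ) : Fin (n+1)) := by
      rw [← he'.2, Equiv.apply_symm_apply]
    have hlt' : l' - 1 < n + 1 := by omega
    have : (σ v : ℕ) = l' - 1 := by
      rw [hvval, Fin.val_natCast, Nat.mod_eq_of_lt hlt']
    omega
  · exact absurd hk1 he'.1
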